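/- Let R₀ be a commutative ring and let R be the polynomial ring over R₀ in the variables b′₁, …, b′_n, b₁, …, b_{n+r}, and V_{ij} for 1 ≤ i ≤ r and 1 ≤ j ≤ n+r. Let {1, …, n} = S₁ ⊔ ⋯ ⊔ S_k be a partition, and for each 1 ≤ t ≤ k let I_t ⊆ R be the ideal generated by { b_j·b′_l − b_l·b′_j : j, l ∈ S_t }. Define L_i = ∑_{j=1}^{n+r} V_{ij}·b_j ∈ R for 1 ≤ i ≤ r. Then the images of L₁, …, L_r in the quotient ring R/(I₁ + ⋯ + I_k) form a regular sequence: for each i = 1, …, r, the image of L_i in R/(I₁ + ⋯ + I_k + (L₁, …, L_{i−1})) is a non-zero-divisor. -/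

import Mathlib

open MvPolynomial

namespace Stmt16Aux

variable {A B : Type*} [CommRing A] [CommRing B]

/-- `a` is a non-zero-divisor modulo the ideal `J`. -/
def NzdMod (J : Ideal A) (a : A) : Prop := ∀ f, f * a ∈ J → f ∈ J

lemma nzdMod_iff (J : Ideal A) (a : A) :
    Ideal.Quotient.mk J a ∈ nonZeroDivisors _ ↔ NzdMod J a := by
  rw [mem_nonZeroDivisors_iff_right]
  constructor
  · intro h f hf
    have := h (Ideal.Quotient.mk J f) (by
      rw [← map_mul, Ideal.Quotient.eq_zero_iff_mem]; exact hf)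
    rwa [Ideal.Quotient.eq_zero_iff_mem] at this
  · intro h z hz
    obtain ⟨f, rfl⟩ := Ideal.Quotient.mk_surjective z
    rw [← map_mul, Ideal.Quotient.eq_zero_iff_mem] at hz
    rw [Ideal.Quotient.eq_zero_iff_mem]
    exact h f hz

lemma NzdMod.of_equiv (e : A ≃+* B) {J : Ideal A} {a : A}
    (h : NzdMod (J.map (e : A →+* B)) (e a)) : NzdMod J a := by
  intro f hf
  have h1 : e (f * a) ∈ J.map (e : A →+* B) := Ideal.mem_map_of_mem _ hf
  rw [map_mul] at h1
  have h2 := h _ h1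
  rwa [Ideal.map_comap_of_equiv, Ideal.mem_comap, RingEquiv.symm_apply_apply] at h2

/-- Bridge: modding out the kernel of a surjective ring hom. -/
lemma NzdMod.bridge {f : A →+* B} (hf : Function.Surjective f) (K : Ideal A) (a : A) :
    NzdMod (K.map f) (f a) ↔ NzdMod (RingHom.ker f ⊔ K) a := by
  have hcomap : Ideal.comap f (K.map f) = K ⊔ RingHom.ker f :=
    Ideal.comap_map_of_surjective f hf K
  have hmapker : Ideal.map f (RingHom.ker f) = ⊥ := by
    rw [← le_bot_iff, Ideal.map_le_iff_le_comap]
    intro x hx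
    simpa [Ideal.mem_comap] using hx
  have hmapsup : Ideal.map f (RingHom.ker f ⊔ K) = Ideal.map f K := by
    rw [Ideal.map_sup, hmapker, bot_sup_eq]
  constructor
  · intro h g hg
    have h1 : f g * f a ∈ Ideal.map f K := by
      rw [← map_mul, ← hmapsup]
      exact Ideal.mem_map_of_mem _ hg
    have h2 := h _ h1
    have h3 : g ∈ Ideal.comap f (K.map f) := h2
    rw [hcomap] at h3
    rwa [sup_comm] at h3
  · intro h g hg
    obtain ⟨g0, rfl⟩ := hf g
    rw [← map_mul] at hg
    have h1 : g0 * a ∈ Ideal.comap f (K.map f) := hg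
    rw [hcomap, sup_comm] at h1
    have h2 := h _ h1
    rw [← hmapsup]
    exact Ideal.mem_map_of_mem _ h2

lemma nzd_of_equiv (e : A ≃+* B) {a : A} (h : a ∈ nonZeroDivisors A) :
    e a ∈ nonZeroDivisors B := by
  rw [mem_nonZeroDivisors_iff_right] at h ⊢
  intro z hz
  have h1 : e.symm z * a = 0 := by
    apply e.injective
    simpa [map_mul] using hz
  have := h _ h1
  have := congrArg e this
  simpa using this

lemma C_nzd_mv {σ : Type*} {a : A} (h : a ∈ nonZeroDivisors A) :
    (C a : MvPolynomial σ A) ∈ nonZeroDivisors _ := by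
  rw [mem_nonZeroDivisors_iff_right] at h ⊢
  intro p hp
  rw [mul_comm] at hp
  ext d
  have := congrArg (coeff d) hp
  rw [coeff_C_mul, coeff_zero, mul_comm] at this
  simpa using h _ this

lemma C_nzd_poly {a : A} (h : a ∈ nonZeroDivisors A) :
    (Polynomial.C a : Polynomial A) ∈ nonZeroDivisors _ := by
  rw [mem_nonZeroDivisors_iff_right] at h ⊢
  intro p hp
  ext d
  have := congrArg (fun q => Polynomial.coeff q d) hp
  simp only [Polynomial.coeff_mul_C, Polynomial.coeff_zero] at this
  simpa using h _ this

lemma linear_nzd {a : A} (b : A) (ha : a ∈ nonZeroDivisors A) :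
    (Polynomial.C a * Polynomial.X + Polynomial.C b) ∈ nonZeroDivisors (Polynomial A) := by
  rw [mem_nonZeroDivisors_iff_right] at ha ⊢
  intro q hq
  by_contra h0
  have hco : q.coeff q.natDegree * a = 0 := by
    have := congrArg (fun p => Polynomial.coeff p (q.natDegree + 1)) hq
    simp only [mul_add, Polynomial.coeff_add, Polynomial.coeff_zero, ← mul_assoc,
      Polynomial.coeff_mul_C, Polynomial.coeff_mul_X] at this
    rw [Polynomial.coeff_natDegree_succ_eq_zero, zero_mul, add_zero] at this
    exact this
  have := ha _ hco
  exact h0 (Polynomial.leadingCoeff_eq_zero.mp this)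

lemma X_nzd_quot_mapC (I : Ideal A) :
    Ideal.Quotient.mk (Ideal.map (Polynomial.C : A →+* Polynomial A) I) Polynomial.X
      ∈ nonZeroDivisors _ := by
  rw [mem_nonZeroDivisors_iff_right]
  intro z hz
  obtain ⟨p, rfl⟩ := Ideal.Quotient.mk_surjective z
  rw [← map_mul, Ideal.Quotient.eq_zero_iff_mem] at hz
  rw [Ideal.Quotient.eq_zero_iff_mem]
  rw [Ideal.mem_map_C_iff] at hz ⊢
  intro m
  have := hz (m + 1)
  rwa [Polynomial.coeff_mul_X] at this




section Theta
variable {σ : Type*} [DecidableEq σ]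

/-- Substitution killing the variable `v`. -/
noncomputable def kill (v : σ) : MvPolynomial σ A →ₐ[A] MvPolynomial σ A :=
  aeval (fun s => if s = v then 0 else X s)

@[simp] lemma kill_X_self (v : σ) : kill (A := A) v (X v) = 0 := by simp [kill]
@[simp] lemma kill_X_ne (v : σ) {s : σ} (h : s ≠ v) : kill (A := A) v (X s) = X s := by
  simp [kill, h]
@[simp] lemma kill_C (v : σ) (a : A) : kill (A := A) v (C a) = C a := by
  simp [kill, algebraMap_eq]

/-- Splitting off the variable `v` of a multivariate polynomial ring. -/
noncomputable def theta (v : σ) :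
    MvPolynomial σ A ≃+* Polynomial (MvPolynomial {s : σ // s ≠ v} A) :=
  ((renameEquiv A (Equiv.optionSubtypeNe v).symm).trans
    (optionEquivLeft A {s : σ // s ≠ v})).toRingEquiv

@[simp] lemma theta_X_self (v : σ) : theta (A := A) v (X v) = Polynomial.X := by
  simp [theta, Equiv.optionSubtypeNe_symm_self, optionEquivLeft_X_none]

@[simp] lemma theta_X_ne (v : σ) {s : σ} (h : s ≠ v) :
    theta (A := A) v (X s) = Polynomial.C (X ⟨s, h⟩) := by
  simp [theta, Equiv.optionSubtypeNe_symm_of_ne h, optionEquivLeft_X_some]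

@[simp] lemma theta_C (v : σ) (a : A) : theta (A := A) v (C a) = Polynomial.C (C a) := by
  simp [theta, optionEquivLeft_C]

lemma theta_kill_mem_range_C (v : σ) (p : MvPolynomial σ A) :
    theta v (kill v p) ∈ Set.range (Polynomial.C :
      MvPolynomial {s : σ // s ≠ v} A →+* Polynomial (MvPolynomial {s : σ // s ≠ v} A)) := by
  induction p using MvPolynomial.induction_on with
  | C a => exact ⟨C a, by simp⟩
  | add p q hp hq =>
      obtain ⟨x, hx⟩ := hp; obtain ⟨y, hy⟩ := hq
      exact ⟨x + y, by simp [map_add, hx, hy]⟩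
  | mul_X p s hp =>
      obtain ⟨x, hx⟩ := hp
      by_cases h : s = v
      · subst h; exact ⟨0, by simp [map_mul]⟩
      · exact ⟨x * X ⟨s, h⟩, by simp [map_mul, hx, theta_X_ne v h, kill_X_ne v h]⟩

lemma theta_mem_range_C_of_kill (v : σ) {p : MvPolynomial σ A} (hp : kill v p = p) :
    theta v p ∈ Set.range (Polynomial.C :
      MvPolynomial {s : σ // s ≠ v} A →+* Polynomial (MvPolynomial {s : σ // s ≠ v} A)) := by
  exact hp ▸ theta_kill_mem_range_C v p

/-- `theta` intertwines killing a variable `w ≠ v` with the coefficientwise kill. -/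
lemma theta_kill_comm (v w : σ) (hw : w ≠ v) (p : MvPolynomial σ A) :
    theta v (kill w p) =
      Polynomial.map ((kill (⟨w, hw⟩ : {s : σ // s ≠ v})).toRingHom) (theta v p) := by
  induction p using MvPolynomial.induction_on with
  | C a => simp
  | add p q hp hq => simp [map_add, hp, hq]
  | mul_X p s hp =>
      rw [map_mul, map_mul, map_mul, Polynomial.map_mul, hp]
      refine congrArg₂ (· * ·) rfl ?_
      by_cases h : s = w
      · subst h; simp [theta_X_ne v hw]
      · rw [kill_X_ne w h]
        by_cases h2 : s = v
        · subst h2; simp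
        · rw [theta_X_ne v h2, Polynomial.map_C]
          simp [kill_X_ne _ (show (⟨s, h2⟩ : {s : σ // s ≠ v}) ≠ ⟨w, hw⟩ from
              fun he => h (congrArg Subtype.val he))]
lemma kill_kill (v : σ) (p : MvPolynomial σ A) : kill v (kill v p) = kill v p := by
  induction p using MvPolynomial.induction_on with
  | C a => simp
  | add p q hp hq => simp [map_add, hp, hq]
  | mul_X p s hp =>
      simp only [map_mul, hp]
      congr 1
      by_cases h : s = v
      · subst h; simp
      · simp [kill_X_ne _ h]

lemma kill_comm (v w : σ) (p : MvPolynomial σ A) :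
    kill v (kill w p) = kill w (kill v p) := by
  induction p using MvPolynomial.induction_on with
  | C a => simp
  | add p q hp hq => simp [map_add, hp, hq]
  | mul_X p s hp =>
      simp only [map_mul, hp]
      congr 1
      by_cases h : s = v <;> by_cases h2 : s = w
      · subst h; subst h2; rfl
      · subst h; rw [kill_X_ne _ h2, kill_X_self, map_zero]
      · subst h2; rw [kill_X_self, map_zero, kill_X_ne _ h, kill_X_self]
      · rw [kill_X_ne _ h2, kill_X_ne _ h, kill_X_ne _ h2]

lemma lin_split {ι : Type*} [Fintype ι] [DecidableEq ι] (u : ι → σ)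
    (hu : Function.Injective u) (b : ι → A) (l₀ : ι) :
    (∑ l, X (u l) * C (b l)) =
      X (u l₀) * C (b l₀) + kill (u l₀) (∑ l, X (u l) * C (b l)) := by
  rw [map_sum]
  have hterm : ∀ l, kill (u l₀) (X (u l) * C (b l))
      = if l = l₀ then 0 else X (u l) * C (b l) := by
    intro l
    by_cases h : l = l₀
    · subst h; simp
    · rw [map_mul, kill_C, kill_X_ne _ (fun he => h (hu he)), if_neg h]
  rw [Finset.sum_congr rfl (fun l _ => hterm l)]
  have h2 : (∑ l, if l = l₀ then 0 else X (u l) * C (b l))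
      = ∑ l ∈ Finset.univ.erase l₀, X (u l) * C (b l) := by
    rw [← Finset.sum_erase_add _ _ (Finset.mem_univ l₀), if_pos rfl, add_zero]
    exact Finset.sum_congr rfl (fun l hl => if_neg (Finset.ne_of_mem_erase hl))
  rw [h2, ← Finset.add_sum_erase _ _ (Finset.mem_univ l₀)]

end Theta

section VarsNzd
variable {σ : Type*} [DecidableEq σ]

lemma vars_nzd (v : σ) (G : Set (MvPolynomial σ A))
    (hG : ∀ p ∈ G, kill v p = p) :
    Ideal.Quotient.mk (Ideal.span G) (X v) ∈ nonZeroDivisors _ := by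
  classical
  set Θ := theta (A := A) v with hΘ
  set G0 : Set (MvPolynomial {s : σ // s ≠ v} A) :=
    {q | (Polynomial.C q : Polynomial (MvPolynomial {s : σ // s ≠ v} A)) ∈ Θ '' G} with hG0
  have himg : Θ '' G = Polynomial.C '' G0 := by
    ext p
    constructor
    · rintro ⟨g, hg, rfl⟩
      obtain ⟨q, hq⟩ := theta_mem_range_C_of_kill v (hG g hg)
      exact ⟨q, by rw [hG0, Set.mem_setOf_eq, hq]; exact ⟨g, hg, rfl⟩, hq⟩
    · rintro ⟨q, hq, rfl⟩
      exact hq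
  have hmap : Ideal.map (Θ : MvPolynomial σ A →+* _) (Ideal.span G) =
      Ideal.map (Polynomial.C : MvPolynomial {s : σ // s ≠ v} A →+* _) (Ideal.span G0) := by
    rw [Ideal.map_span, Ideal.map_span]
    exact congrArg Ideal.span himg
  rw [mem_nonZeroDivisors_iff_right]
  intro z hz
  obtain ⟨f, rfl⟩ := Ideal.Quotient.mk_surjective z
  rw [← map_mul, Ideal.Quotient.eq_zero_iff_mem] at hz
  rw [Ideal.Quotient.eq_zero_iff_mem]
  have h1 : Θ (f * X v) ∈ Ideal.map (Θ : MvPolynomial σ A →+* _) (Ideal.span G) :=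
    Ideal.mem_map_of_mem _ hz
  rw [hmap, map_mul, hΘ, theta_X_self, ← hΘ] at h1
  rw [Ideal.mem_map_C_iff] at h1
  have h2 : Θ f ∈ Ideal.map (Polynomial.C :
      MvPolynomial {s : σ // s ≠ v} A →+* _) (Ideal.span G0) := by
    rw [Ideal.mem_map_C_iff]
    intro m
    have := h1 (m + 1)
    rwa [Polynomial.coeff_mul_X] at this
  rw [← hmap, Ideal.map_comap_of_equiv, Ideal.mem_comap, RingEquiv.symm_apply_apply] at h2
  exact h2

end VarsNzd

lemma linear_nzd_quot (I : Ideal A) (a b : A)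
    (ha : Ideal.Quotient.mk I a ∈ nonZeroDivisors _) :
    Ideal.Quotient.mk (Ideal.map (Polynomial.C : A →+* Polynomial A) I)
      (Polynomial.C a * Polynomial.X + Polynomial.C b) ∈ nonZeroDivisors _ := by
  have hker : RingHom.ker (Polynomial.mapRingHom (Ideal.Quotient.mk I)) =
      Ideal.map (Polynomial.C : A →+* Polynomial A) I := by
    rw [Polynomial.ker_mapRingHom, Ideal.mk_ker]
  rw [mem_nonZeroDivisors_iff_right]
  intro z hz
  obtain ⟨q, rfl⟩ := Ideal.Quotient.mk_surjective z
  rw [← map_mul, Ideal.Quotient.eq_zero_iff_mem, ← hker, RingHom.mem_ker] at hz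
  rw [Ideal.Quotient.eq_zero_iff_mem, ← hker, RingHom.mem_ker]
  rw [map_mul] at hz
  have hp : Polynomial.mapRingHom (Ideal.Quotient.mk I)
        (Polynomial.C a * Polynomial.X + Polynomial.C b) =
      Polynomial.C (Ideal.Quotient.mk I a) * Polynomial.X +
        Polynomial.C (Ideal.Quotient.mk I b) := by
    simp
  rw [hp] at hz
  exact (mem_nonZeroDivisors_iff_right.mp (linear_nzd _ ha)) _ hz

lemma step_nzd (I : Ideal A) (x a b : A)
    (hx : Ideal.Quotient.mk I x ∈ nonZeroDivisors _)
    (ha : Ideal.Quotient.mk (I ⊔ Ideal.span {x}) a ∈ nonZeroDivisors _) :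
    Ideal.Quotient.mk (Ideal.map (Polynomial.C : A →+* Polynomial A) I ⊔
        Ideal.span {Polynomial.C a * Polynomial.X + Polynomial.C b})
      (Polynomial.C x) ∈ nonZeroDivisors _ := by
  classical
  set p : Polynomial A := Polynomial.C a * Polynomial.X + Polynomial.C b with hpdef
  have hker : RingHom.ker (Polynomial.mapRingHom (Ideal.Quotient.mk I)) =
      Ideal.map (Polynomial.C : A →+* Polynomial A) I := by
    rw [Polynomial.ker_mapRingHom, Ideal.mk_ker]
  rw [mem_nonZeroDivisors_iff_right]
  intro z hz
  obtain ⟨q, rfl⟩ := Ideal.Quotient.mk_surjective z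
  rw [← map_mul, Ideal.Quotient.eq_zero_iff_mem] at hz
  rw [Ideal.Quotient.eq_zero_iff_mem]
  -- decompose
  obtain ⟨m, hm, w, hw, hmw⟩ := Submodule.mem_sup.mp hz
  obtain ⟨h, rfl⟩ := Ideal.mem_span_singleton'.mp hw
  -- map to A/I
  set φ := Polynomial.mapRingHom (Ideal.Quotient.mk I) with hφ
  have hφm : φ m = 0 := by rw [← RingHom.mem_ker, hker]; exact hm
  set x1 := Ideal.Quotient.mk I x with hx1
  have hCx : φ (Polynomial.C x) = Polynomial.C x1 := by simp [hφ, hx1]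
  have heq1 : φ q * Polynomial.C x1 = φ h * φ p := by
    have h5 := congrArg φ hmw
    rw [map_add, map_mul, hφm, zero_add, map_mul] at h5
    rw [h5, hCx]
  -- now work over A₁ := A ⧸ I
  set J1 : Ideal (A ⧸ I) := Ideal.span {x1} with hJ1
  set ψ := Polynomial.mapRingHom (Ideal.Quotient.mk J1) with hψ
  have hψx : ψ (Polynomial.C x1) = 0 := by
    simp only [hψ, Polynomial.coe_mapRingHom, Polynomial.map_C]
    rw [show Ideal.Quotient.mk J1 x1 = 0 from Ideal.Quotient.eq_zero_iff_mem.mpr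
      (Ideal.subset_span rfl)]
    exact Polynomial.C_0
  -- a is nzd in (A/I)/(x1)
  have hmapx : Ideal.map (Ideal.Quotient.mk I) (Ideal.span {x}) = J1 := by
    rw [Ideal.map_span, Set.image_singleton]
  have ha2 : Ideal.Quotient.mk J1 (Ideal.Quotient.mk I a) ∈ nonZeroDivisors _ := by
    have h2 := nzd_of_equiv (DoubleQuot.quotQuotEquivQuotSup I (Ideal.span {x})).symm ha
    rw [DoubleQuot.quotQuotEquivQuotSup_symm_quotQuotMk] at h2
    rw [← hmapx]
    exact h2
  have hψp : ψ (φ p) = Polynomial.C (Ideal.Quotient.mk J1 (Ideal.Quotient.mk I a)) *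
      Polynomial.X + Polynomial.C (Ideal.Quotient.mk J1 (Ideal.Quotient.mk I b)) := by
    simp [hψ, hφ, hpdef]
  have hψφq : ψ (φ h) = 0 → (φ h) ∈ Ideal.span {Polynomial.C x1} := by
    intro h0
    have : φ h ∈ RingHom.ker ψ := h0
    rw [hψ, Polynomial.ker_mapRingHom, Ideal.mk_ker, hJ1, Ideal.map_span,
      Set.image_singleton] at this
    exact this
  -- from heq1, apply ψ
  have heq2 : ψ (φ h) * ψ (φ p) = 0 := by
    have := congrArg ψ heq1
    rw [map_mul, hψx, mul_zero, map_mul] at this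
    rw [← this]
  rw [hψp] at heq2
  have hφh0 : ψ (φ h) = 0 :=
    (mem_nonZeroDivisors_iff_right.mp (linear_nzd _ ha2)) _ heq2
  obtain ⟨h2, hh2⟩ := Ideal.mem_span_singleton'.mp (hψφq hφh0)
  -- cancel C x1
  have hCx1 : (Polynomial.C x1 : Polynomial (A ⧸ I)) ∈ nonZeroDivisors _ := C_nzd_poly hx
  have hcancel : Polynomial.C x1 * (φ q - φ p * h2) = 0 := by
    rw [mul_sub, sub_eq_zero]
    calc Polynomial.C x1 * φ q = φ q * Polynomial.C x1 := mul_comm _ _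
    _ = φ h * φ p := heq1
    _ = (h2 * Polynomial.C x1) * φ p := by rw [hh2]
    _ = Polynomial.C x1 * (φ p * h2) := by ring
  have hsub : φ q - φ p * h2 = 0 := by
    have := (mem_nonZeroDivisors_iff_right.mp hCx1) _ (by rw [mul_comm] at hcancel; exact hcancel)
    exact this
  -- lift h2
  obtain ⟨h3, hh3⟩ := Polynomial.map_surjective _ Ideal.Quotient.mk_surjective h2
  have : φ (q - p * h3) = 0 := by
    rw [map_sub, map_mul]
    rw [show φ h3 = h2 from hh3] at *
    exact hsub
  have hq1 : q - p * h3 ∈ Ideal.map (Polynomial.C : A →+* Polynomial A) I := by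
    rw [← hker]; exact this
  have : q = (q - p * h3) + p * h3 := by ring
  rw [this]
  exact Ideal.add_mem _ (Ideal.mem_sup_left hq1)
    (Ideal.mem_sup_right (Ideal.mem_span_singleton'.mpr ⟨h3, mul_comm _ _⟩))

section NzdModVersions
variable {σ : Type*} [DecidableEq σ]

lemma nzdMod_vars (v : σ) (G : Set (MvPolynomial σ A))
    (hG : ∀ p ∈ G, kill v p = p) : NzdMod (Ideal.span G) (X v) :=
  (nzdMod_iff _ _).mp (vars_nzd v G hG)

lemma nzdMod_linear (I : Ideal A) (a b : A) (ha : NzdMod I a) :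
    NzdMod (Ideal.map (Polynomial.C : A →+* Polynomial A) I)
      (Polynomial.C a * Polynomial.X + Polynomial.C b) :=
  (nzdMod_iff _ _).mp (linear_nzd_quot I a b ((nzdMod_iff _ _).mpr ha))

lemma nzdMod_step (I : Ideal A) (x a b : A)
    (hx : NzdMod I x) (ha : NzdMod (I ⊔ Ideal.span {x}) a) :
    NzdMod (Ideal.map (Polynomial.C : A →+* Polynomial A) I ⊔
        Ideal.span {Polynomial.C a * Polynomial.X + Polynomial.C b}) (Polynomial.C x) :=
  (nzdMod_iff _ _).mp (step_nzd I x a b ((nzdMod_iff _ _).mpr hx) ((nzdMod_iff _ _).mpr ha))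

end NzdModVersions

section Helpers
variable {σ : Type*} [DecidableEq σ]

lemma map_kill (f : A →+* B) (w : σ) (p : MvPolynomial σ A) :
    MvPolynomial.map f (kill w p) = kill w (MvPolynomial.map f p) := by
  induction p using MvPolynomial.induction_on with
  | C a => simp
  | add p q hp hq => simp [map_add, hp, hq]
  | mul_X p s hp =>
      rw [map_mul, map_mul, map_mul, hp]
      congr 1
      by_cases h : s = w
      · subst h; simp
      · simp [kill_X_ne _ h]

end Helpers

lemma map_span_range {α : Type*} (f : A →+* B) (h : α → A) :
    Ideal.map f (Ideal.span (Set.range h)) = Ideal.span (Set.range (fun x => f (h x))) := by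
  rw [Ideal.map_span, ← Set.range_comp]
  rfl

lemma range_fin_succ_eq {α : Type*} {i : ℕ} (F : Fin (i + 1) → α) :
    Set.range F = insert (F (Fin.last i)) (Set.range fun j : Fin i => F j.castSucc) := by
  ext x
  constructor
  · rintro ⟨j, rfl⟩
    rcases Fin.eq_castSucc_or_eq_last j with ⟨k, rfl⟩ | rfl
    · exact Set.mem_insert_of_mem _ ⟨k, rfl⟩
    · exact Set.mem_insert _ _
  · rintro (rfl | ⟨k, rfl⟩)
    · exact ⟨Fin.last i, rfl⟩
    · exact ⟨k.castSucc, rfl⟩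

lemma nzdMod_bot_iff (a : A) : NzdMod (⊥ : Ideal A) a ↔ a ∈ nonZeroDivisors A := by
  simp [NzdMod, Ideal.mem_bot, mem_nonZeroDivisors_iff_right]

/-- The main induction: generic linear forms whose designated coefficients form a
"totally regular" family are regular. -/
theorem genericRegular (i : ℕ) :
    ∀ {B : Type u_1} [CommRing B] {σ : Type u_3} [DecidableEq σ]
      (vs : Fin i → σ), Function.Injective vs →
      ∀ (g : Option (Fin i) → B) (c : Fin i → MvPolynomial σ B),
      (∀ j k, kill (vs k) (c j) = c j) →
      (∀ (S : Set (Option (Fin i))) (t : Option (Fin i)), t ∉ S →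
        NzdMod (Ideal.span (g '' S)) (g t)) →
      NzdMod (Ideal.span (Set.range (fun j => X (vs j) * C (g (some j)) + c j)))
        (C (g none) : MvPolynomial σ B) := by
  induction i with
  | zero =>
      intro B _ σ _ vs hinj g c hc hreg
      rw [Set.range_eq_empty, Ideal.span_empty, nzdMod_bot_iff]
      have h0 := hreg ∅ none (by simp)
      rw [Set.image_empty, Ideal.span_empty, nzdMod_bot_iff] at h0
      exact C_nzd_mv h0
  | succ i ih =>
      intro B _ σ _ vs hinj g c hc hreg
      classical
      set v : σ := vs (Fin.last i) with hv
      set Θ := theta (A := B) v with hΘdef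
      -- the coefficients of the c's after splitting off `v`
      have hcrange : ∀ j, ∃ q, (Polynomial.C q : Polynomial (MvPolynomial {s : σ // s ≠ v} B))
          = Θ (c j) := by
        intro j
        obtain ⟨q, hq⟩ := theta_mem_range_C_of_kill v (hc j (Fin.last i))
        exact ⟨q, hq⟩
      choose c' hc' using hcrange
      -- remaining designated variables
      have hvs_ne : ∀ j : Fin i, vs j.castSucc ≠ v := by
        intro j h
        exact (Fin.castSucc_lt_last j).ne (hinj h)
      set vs' : Fin i → {s : σ // s ≠ v} := fun j => ⟨vs j.castSucc, hvs_ne j⟩ with hvs'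
      have hinj' : Function.Injective vs' := by
        intro j k h
        have := hinj (congrArg Subtype.val h)
        exact Fin.castSucc_injective i this
      set g' : Option (Fin i) → B := g ∘ Option.map Fin.castSucc with hg'
      set c'' : Fin i → MvPolynomial {s : σ // s ≠ v} B := fun j => c' j.castSucc with hc''def
      -- previous linear forms after splitting
      have hL' : ∀ j : Fin i, Θ (X (vs j.castSucc) * C (g (some j.castSucc)) + c j.castSucc)
          = Polynomial.C (X (vs' j) * C (g' (some j)) + c'' j) := by
        intro j
        rw [map_add, map_mul, hΘdef, theta_X_ne v (hvs_ne j), theta_C, ← hΘdef, ← hc']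
        rw [← Polynomial.C_mul, ← Polynomial.C_add]
        rfl
      -- last linear form after splitting
      have hLlast : Θ (X (vs (Fin.last i)) * C (g (some (Fin.last i))) + c (Fin.last i))
          = Polynomial.C (C (g (some (Fin.last i)))) * Polynomial.X
            + Polynomial.C (c' (Fin.last i)) := by
        rw [map_add, map_mul, hΘdef, ← hv, theta_X_self, theta_C, ← hΘdef, ← hc', mul_comm]
      -- image of the ideal
      have hset : (Set.range fun x => (Θ : MvPolynomial σ B →+*
              Polynomial (MvPolynomial {s : σ // s ≠ v} B)) (X (vs x) * C (g (some x)) + c x))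
          = insert (Polynomial.C (C (g (some (Fin.last i)))) * Polynomial.X
              + Polynomial.C (c' (Fin.last i)))
            (Polynomial.C '' Set.range (fun j : Fin i =>
              X (vs' j) * C (g' (some j)) + c'' j)) := by
        ext p
        constructor
        · rintro ⟨j, rfl⟩
          rcases Fin.eq_castSucc_or_eq_last j with ⟨k, rfl⟩ | rfl
          · exact Set.mem_insert_of_mem _ ⟨_, ⟨k, rfl⟩, (hL' k).symm⟩
          · exact Set.mem_insert_iff.mpr (Or.inl hLlast)
        · rintro (rfl | ⟨q, ⟨k, rfl⟩, rfl⟩)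
          · exact ⟨Fin.last i, hLlast⟩
          · exact ⟨k.castSucc, hL' k⟩
      have hIm : Ideal.map (Θ : MvPolynomial σ B →+* _)
            (Ideal.span (Set.range (fun j => X (vs j) * C (g (some j)) + c j)))
          = Ideal.map (Polynomial.C : MvPolynomial {s : σ // s ≠ v} B →+* _)
              (Ideal.span (Set.range (fun j => X (vs' j) * C (g' (some j)) + c'' j)))
            ⊔ Ideal.span {Polynomial.C (C (g (some (Fin.last i)))) * Polynomial.X
                + Polynomial.C (c' (Fin.last i))} := by
        rw [map_span_range, hset, Ideal.span_insert, ← Ideal.map_span]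
        exact sup_comm _ _
      -- transport across Θ
      apply NzdMod.of_equiv Θ
      rw [hIm, hΘdef, theta_C]
      have hkill2 : ∀ j k, kill (vs' k) (c'' j) = c'' j := by
        intro j k
        have h1 := theta_kill_comm (A := B) v (vs k.castSucc) (hvs_ne k) (c j.castSucc)
        rw [hc j.castSucc k.castSucc, ← hc', Polynomial.map_C] at h1
        have h2 := Polynomial.C_injective h1
        exact h2.symm
      -- apply the two-step lemma
      apply nzdMod_step
      · -- C (g none) is regular mod previous forms: induction hypothesis
        have := ih vs' hinj' g' c'' hkill2
          (by
            intro S t ht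
            have hmem : Option.map Fin.castSucc t ∉ Option.map Fin.castSucc '' S := by
              rintro ⟨s', hs', he⟩
              exact ht (by rwa [← Option.map_injective (Fin.castSucc_injective i) he])
            have := hreg (Option.map Fin.castSucc '' S) (Option.map Fin.castSucc t) hmem
            rwa [hg', Set.image_comp])
        exact this
      · -- regularity modulo previous + C (g none)
        set J0 : Ideal B := Ideal.span {g none} with hJ0
        set ι : Option (Fin i) → Option (Fin (i + 1)) :=
          fun o => some (Option.elim o (Fin.last i) Fin.castSucc) with hι
        set g2 : Option (Fin i) → B ⧸ J0 := fun o => Ideal.Quotient.mk J0 (g (ι o)) with hg2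
        set c2 : Fin i → MvPolynomial {s : σ // s ≠ v} (B ⧸ J0) :=
          fun j => MvPolynomial.map (Ideal.Quotient.mk J0) (c'' j) with hc2def
        have hf2 : Function.Surjective
            (MvPolynomial.map (Ideal.Quotient.mk J0) :
              MvPolynomial {s : σ // s ≠ v} B →+* MvPolynomial {s : σ // s ≠ v} (B ⧸ J0)) :=
          MvPolynomial.map_surjective _ Ideal.Quotient.mk_surjective
        have hker2 : RingHom.ker
            (MvPolynomial.map (Ideal.Quotient.mk J0) :
              MvPolynomial {s : σ // s ≠ v} B →+* MvPolynomial {s : σ // s ≠ v} (B ⧸ J0))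
            = Ideal.span {(C (g none) : MvPolynomial {s : σ // s ≠ v} B)} := by
          rw [MvPolynomial.ker_map, Ideal.mk_ker, hJ0, Ideal.map_span, Set.image_singleton]
        rw [sup_comm, ← hker2]
        apply (NzdMod.bridge hf2 _ _).mp
        rw [map_span_range]
        have hmapC : (MvPolynomial.map (Ideal.Quotient.mk J0) :
              MvPolynomial {s : σ // s ≠ v} B →+* _) (C (g (some (Fin.last i))))
            = C (g2 none) := by
          rw [MvPolynomial.map_C]
          rfl
        rw [hmapC]
        have hfun : (fun x => (MvPolynomial.map (Ideal.Quotient.mk J0) :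
              MvPolynomial {s : σ // s ≠ v} B →+* _) (X (vs' x) * C (g' (some x)) + c'' x))
            = fun x => X (vs' x) * C (g2 (some x)) + c2 x := by
          funext x
          rw [map_add, map_mul, MvPolynomial.map_X, MvPolynomial.map_C]
          rfl
        rw [hfun]
        -- apply the induction hypothesis over the base B ⧸ J0
        apply ih vs' hinj' g2 c2
        · intro j k
          rw [hc2def]
          dsimp only
          rw [← map_kill, hkill2]
        · intro S t ht
          have hιinj : Function.Injective ι := by
            intro a b hab
            simp only [hι] at hab
            have hab2 := Option.some_injective _ hab
            cases a <;> cases b <;> simp only [Option.elim] at hab2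
            · rfl
            · exact absurd hab2.symm (Fin.castSucc_lt_last _).ne
            · exact absurd hab2 (Fin.castSucc_lt_last _).ne
            · exact congrArg some (Fin.castSucc_injective i hab2)
          have hmem : ι t ∉ insert none (ι '' S) := by
            intro hmem
            rcases Set.mem_insert_iff.mp hmem with h | ⟨s', hs', he⟩
            · simp [hι] at h
            · exact ht (hιinj he ▸ hs')
          have h3 := hreg (insert none (ι '' S)) (ι t) hmem
          have key : NzdMod (Ideal.map (Ideal.Quotient.mk J0)
                (Ideal.span ((g ∘ ι) '' S))) (Ideal.Quotient.mk J0 (g (ι t))) := by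
            apply (NzdMod.bridge Ideal.Quotient.mk_surjective _ _).mpr
            rw [Ideal.mk_ker]
            rw [show J0 ⊔ Ideal.span ((g ∘ ι) '' S)
                = Ideal.span (g '' insert none (ι '' S)) from by
              rw [Set.image_insert_eq, Set.insert_eq, Ideal.span_union, hJ0, Set.image_comp]]
            exact h3
          rw [Ideal.map_span, ← Set.image_comp] at key
          have himg2 : (⇑(Ideal.Quotient.mk J0) ∘ g ∘ ι) '' S = g2 '' S := rfl
          rw [himg2] at key
          exact key
end Stmt16Aux
namespace Stmt16Aux

noncomputable section PsiSec
variable {R₀ : Type*} [CommRing R₀] (n r : ℕ)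

def Esplit : (Fin n ⊕ Fin (n + r) ⊕ Fin r × Fin (n + r)) ≃
    ((Fin r × Fin (n + r)) ⊕ (Fin n ⊕ Fin (n + r))) where
  toFun := Sum.elim (fun j => Sum.inr (Sum.inl j))
    (Sum.elim (fun l => Sum.inr (Sum.inr l)) Sum.inl)
  invFun := Sum.elim (fun q => Sum.inr (Sum.inr q))
    (Sum.elim Sum.inl (fun l => Sum.inr (Sum.inl l)))
  left_inv := by rintro (j | l | q) <;> rfl
  right_inv := by rintro (q | j | l) <;> rfl

def Psi : MvPolynomial (Fin n ⊕ Fin (n + r) ⊕ Fin r × Fin (n + r)) R₀ ≃+*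
    MvPolynomial (Fin r × Fin (n + r)) (MvPolynomial (Fin n ⊕ Fin (n + r)) R₀) :=
  (renameEquiv R₀ (Esplit n r)).toRingEquiv.trans (sumRingEquiv R₀ _ _)

lemma Psi_bp (j : Fin n) : Psi (R₀ := R₀) n r (X (Sum.inl j)) = C (X (Sum.inl j)) := by
  simp [Psi, Esplit, sumRingEquiv_X_inl, sumRingEquiv_X_inr]

lemma Psi_b (l : Fin (n + r)) :
    Psi (R₀ := R₀) n r (X (Sum.inr (Sum.inl l))) = C (X (Sum.inr l)) := by
  simp [Psi, Esplit, sumRingEquiv_X_inl, sumRingEquiv_X_inr]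

lemma Psi_V (q : Fin r × Fin (n + r)) :
    Psi (R₀ := R₀) n r (X (Sum.inr (Sum.inr q))) = X q := by
  simp [Psi, Esplit, sumRingEquiv_X_inl, sumRingEquiv_X_inr]

end PsiSec

end Stmt16Aux


open Stmt16Aux in
set_option maxHeartbeats 2000000 in
/-- the final regularity claim in the proof of Proposition `p:br-exact`:
over the polynomial ring `R` on the variables `b′₁, …, b′_n`, `b₁, …, b_{n+r}` and
`V_{ij}` (realized as `MvPolynomial (Fin n ⊕ Fin (n+r) ⊕ Fin r × Fin (n+r)) R₀`, with
`b′_j = X (inl j)`, `b_j = X (inr (inl j))`, `V_{ij} = X (inr (inr (i,j)))`), given a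
partition of `{1, …, n}` into blocks (encoded by `part : Fin n → Fin k`), the generic
linear forms `L_i = ∑_j V_{ij} b_j` form a regular sequence modulo the sum
`I₁ + ⋯ + I_k` of the ideals of `2×2` minors `b_j b′_l − b_l b′_j` taken within each
block: the image of each `L_i` in `R/(I₁ + ⋯ + I_k + (L₁, …, L_{i−1}))` is a
non-zero-divisor. -/
theorem stmt16 {R₀ : Type*} [CommRing R₀] (n r k : ℕ)
    (part : Fin n → Fin k) :
    ∀ i : Fin r,
      Ideal.Quotient.mk
        (Ideal.span
          ({p : MvPolynomial (Fin n ⊕ Fin (n + r) ⊕ Fin r × Fin (n + r)) R₀ |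
              ∃ j l : Fin n, part j = part l ∧
                p = X (Sum.inr (Sum.inl (Fin.castAdd r j))) * X (Sum.inl l)
                  - X (Sum.inr (Sum.inl (Fin.castAdd r l))) * X (Sum.inl j)}
            ∪ {p : MvPolynomial (Fin n ⊕ Fin (n + r) ⊕ Fin r × Fin (n + r)) R₀ |
              ∃ j : Fin r, j < i ∧
                p = ∑ l : Fin (n + r),
                  X (Sum.inr (Sum.inr (j, l))) * X (Sum.inr (Sum.inl l))}))
        (∑ l : Fin (n + r), X (Sum.inr (Sum.inr (i, l))) * X (Sum.inr (Sum.inl l)))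
      ∈ nonZeroDivisors _ := by
  intro i
  classical
  rw [nzdMod_iff]
  -- Step A: split off the V-variables
  apply NzdMod.of_equiv (Psi (R₀ := R₀) n r)
  set M₀ : Set (MvPolynomial (Fin n ⊕ Fin (n + r)) R₀) :=
    {m | ∃ j l : Fin n, part j = part l ∧
      m = X (Sum.inr (Fin.castAdd r j)) * X (Sum.inl l)
        - X (Sum.inr (Fin.castAdd r l)) * X (Sum.inl j)} with hM₀
  have hPsiL : ∀ j : Fin r,
      Psi (R₀ := R₀) n r
          (∑ l, X (Sum.inr (Sum.inr (j, l))) * X (Sum.inr (Sum.inl l)))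
        = ∑ l, X (j, l) * C (X (Sum.inr l)) := by
    intro j
    rw [map_sum]
    exact Finset.sum_congr rfl fun l _ => by rw [map_mul, Psi_V, Psi_b]
  rw [Ideal.map_span, Set.image_union, Ideal.span_union]
  have h1 : ((↑(Psi (R₀ := R₀) n r) : MvPolynomial (Fin n ⊕ Fin (n + r) ⊕ Fin r × Fin (n + r)) R₀ →+*
        MvPolynomial (Fin r × Fin (n + r)) (MvPolynomial (Fin n ⊕ Fin (n + r)) R₀)) ''
        {p : MvPolynomial (Fin n ⊕ Fin (n + r) ⊕ Fin r × Fin (n + r)) R₀ |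
          ∃ j l : Fin n, part j = part l ∧
            p = X (Sum.inr (Sum.inl (Fin.castAdd r j))) * X (Sum.inl l)
              - X (Sum.inr (Sum.inl (Fin.castAdd r l))) * X (Sum.inl j)})
      = ⇑(C : MvPolynomial (Fin n ⊕ Fin (n + r)) R₀ →+* _) '' M₀ := by
    have hPsiM : ∀ (j l : Fin n),
        Psi (R₀ := R₀) n r (X (Sum.inr (Sum.inl (Fin.castAdd r j))) * X (Sum.inl l)
          - X (Sum.inr (Sum.inl (Fin.castAdd r l))) * X (Sum.inl j))
        = C (X (Sum.inr (Fin.castAdd r j)) * X (Sum.inl l)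
            - X (Sum.inr (Fin.castAdd r l)) * X (Sum.inl j)) := by
      intro j l
      rw [map_sub, map_mul, map_mul, Psi_b, Psi_bp, Psi_b, Psi_bp,
        ← map_mul, ← map_mul, ← map_sub]
    ext p
    constructor
    · rintro ⟨q, ⟨j, l, hpart, rfl⟩, rfl⟩
      exact ⟨_, ⟨j, l, hpart, rfl⟩, (hPsiM j l).symm ▸ rfl⟩
    · rintro ⟨m, ⟨j, l, hpart, rfl⟩, rfl⟩
      exact ⟨_, ⟨j, l, hpart, rfl⟩, hPsiM j l⟩
  have h2 : ((↑(Psi (R₀ := R₀) n r) : MvPolynomial (Fin n ⊕ Fin (n + r) ⊕ Fin r × Fin (n + r)) R₀ →+*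
        MvPolynomial (Fin r × Fin (n + r)) (MvPolynomial (Fin n ⊕ Fin (n + r)) R₀)) ''
        {p : MvPolynomial (Fin n ⊕ Fin (n + r) ⊕ Fin r × Fin (n + r)) R₀ |
          ∃ j : Fin r, j < i ∧
            p = ∑ l : Fin (n + r),
              X (Sum.inr (Sum.inr (j, l))) * X (Sum.inr (Sum.inl l))})
      = {p | ∃ j : Fin r, j < i ∧ p = ∑ l, X (j, l) * C (X (Sum.inr l))} := by
    ext p
    constructor
    · rintro ⟨q, ⟨j, hj, rfl⟩, rfl⟩
      exact ⟨j, hj, hPsiL j⟩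
    · rintro ⟨j, hj, rfl⟩
      exact ⟨_, ⟨j, hj, rfl⟩, hPsiL j⟩
  rw [h1, h2, ← Ideal.map_span, hPsiL i]
  -- Step B: mod out the minors into the base ring
  have hker1 : RingHom.ker (MvPolynomial.map (Ideal.Quotient.mk (Ideal.span M₀)) :
        MvPolynomial (Fin r × Fin (n + r)) (MvPolynomial (Fin n ⊕ Fin (n + r)) R₀) →+*
          MvPolynomial (Fin r × Fin (n + r)) (MvPolynomial (Fin n ⊕ Fin (n + r)) R₀ ⧸
            Ideal.span M₀))
      = Ideal.map (C : MvPolynomial (Fin n ⊕ Fin (n + r)) R₀ →+* _) (Ideal.span M₀) := by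
    rw [MvPolynomial.ker_map, Ideal.mk_ker]
  rw [← hker1]
  apply (NzdMod.bridge (A := MvPolynomial (Fin r × Fin (n + r)) (MvPolynomial (Fin n ⊕ Fin (n + r)) R₀))
    (B := MvPolynomial (Fin r × Fin (n + r)) (MvPolynomial (Fin n ⊕ Fin (n + r)) R₀ ⧸ Ideal.span M₀))
    (MvPolynomial.map_surjective _ Ideal.Quotient.mk_surjective) _ _).mp
  set β : Fin (n + r) → (MvPolynomial (Fin n ⊕ Fin (n + r)) R₀ ⧸ Ideal.span M₀) :=
    fun l => Ideal.Quotient.mk (Ideal.span M₀) (X (Sum.inr l)) with hβdef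
  have hf1L : ∀ j : Fin r,
      (MvPolynomial.map (Ideal.Quotient.mk (Ideal.span M₀)))
          (∑ l, X (j, l) * C (X (Sum.inr l)))
        = ∑ l, (X (j, l) : MvPolynomial (Fin r × Fin (n + r)) _) * C (β l) := by
    intro j
    rw [map_sum]
    exact Finset.sum_congr rfl fun l _ => by
      rw [map_mul, MvPolynomial.map_X, MvPolynomial.map_C]
  rw [Ideal.map_span]
  have h4 : (⇑(MvPolynomial.map (Ideal.Quotient.mk (Ideal.span M₀)) :
          MvPolynomial (Fin r × Fin (n + r)) (MvPolynomial (Fin n ⊕ Fin (n + r)) R₀) →+* _) ''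
        {p | ∃ j : Fin r, j < i ∧ p = ∑ l, X (j, l) * C (X (Sum.inr l))})
      = {p | ∃ j : Fin r, j < i ∧ p = ∑ l, X (j, l) * C (β l)} := by
    ext p
    constructor
    · rintro ⟨q, ⟨j, hj, rfl⟩, rfl⟩
      exact ⟨j, hj, hf1L j⟩
    · rintro ⟨j, hj, rfl⟩
      exact ⟨_, ⟨j, hj, rfl⟩, hf1L j⟩
  rw [h4, hf1L i]
  -- Step C: split off the designated variable of the target linear form
  set v : Fin r × Fin (n + r) := (i, Fin.natAdd n i) with hv
  apply NzdMod.of_equiv (theta (A := MvPolynomial (Fin n ⊕ Fin (n + r)) R₀ ⧸ Ideal.span M₀) v)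
  set Lb : Fin r → MvPolynomial (Fin r × Fin (n + r))
      (MvPolynomial (Fin n ⊕ Fin (n + r)) R₀ ⧸ Ideal.span M₀) :=
    fun j => ∑ l, X (j, l) * C (β l) with hLbdef
  have hkillLb : ∀ (w : Fin r × Fin (n + r)) (j : Fin r), w.1 ≠ j → kill w (Lb j) = Lb j := by
    intro w j hw
    rw [hLbdef]
    dsimp only
    rw [map_sum]
    exact Finset.sum_congr rfl fun l _ => by
      rw [map_mul, kill_C, kill_X_ne _ (fun h => hw (congrArg Prod.fst h).symm)]
  have hkLb : ∀ j : Fin r, j ≠ i → kill v (Lb j) = Lb j := by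
    intro j hj
    exact hkillLb v j (fun h => hj h.symm)
  choose LT hLT using fun jj : {j : Fin r // j ≠ i} =>
    theta_mem_range_C_of_kill v (hkLb jj.1 jj.2)
  have hsplitLb : ∀ j : Fin r, Lb j = X ((j, Fin.natAdd n j) : Fin r × Fin (n + r))
      * C (β (Fin.natAdd n j)) + kill ((j, Fin.natAdd n j)) (Lb j) := by
    intro j
    exact lin_split (fun l => ((j, l) : Fin r × Fin (n + r)))
      (fun a b h => congrArg Prod.snd h) β (Fin.natAdd n j)
  obtain ⟨bC, hbC⟩ := theta_mem_range_C_of_kill v (kill_kill v (Lb i))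
  have hthLbi : theta v (Lb i) = Polynomial.C (C (β (Fin.natAdd n i))) * Polynomial.X
      + Polynomial.C bC := by
    conv_lhs => rw [hsplitLb i]
    rw [map_add, map_mul, ← hv, theta_X_self, theta_C, ← hbC, mul_comm]
  -- the previous linear forms become constants
  set PT : Set (MvPolynomial {q : Fin r × Fin (n + r) // q ≠ v}
      (MvPolynomial (Fin n ⊕ Fin (n + r)) R₀ ⧸ Ideal.span M₀)) :=
    {q | ∃ j : Fin r, ∃ hj : j < i, q = LT ⟨j, ne_of_lt hj⟩} with hPT
  have hthP : ((↑(theta (A := MvPolynomial (Fin n ⊕ Fin (n + r)) R₀ ⧸ Ideal.span M₀) v) :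
        MvPolynomial (Fin r × Fin (n + r)) _ →+* _) ''
        {p | ∃ j : Fin r, j < i ∧ p = ∑ l, X (j, l) * C (β l)})
      = ⇑(Polynomial.C : MvPolynomial {q : Fin r × Fin (n + r) // q ≠ v} _ →+* _) '' PT := by
    ext p
    constructor
    · rintro ⟨q, ⟨j, hj, rfl⟩, rfl⟩
      exact ⟨LT ⟨j, ne_of_lt hj⟩, ⟨j, hj, rfl⟩, (hLT ⟨j, ne_of_lt hj⟩ : _)⟩
    · rintro ⟨q, ⟨j, hj, rfl⟩, rfl⟩
      exact ⟨Lb j, ⟨j, hj, rfl⟩, (hLT ⟨j, ne_of_lt hj⟩).symm⟩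
  rw [Ideal.map_span, hthP, ← Ideal.map_span, hthLbi]
  apply nzdMod_linear
  -- Step D: the generic-coefficients induction
  have hρr : ∀ kk : Fin i.val, kk.val < r := fun kk => kk.isLt.trans i.isLt
  set ρ : Fin i.val → Fin r := fun kk => ⟨kk.val, hρr kk⟩ with hρ
  have hρlt : ∀ kk, ρ kk < i := fun kk => by
    rw [Fin.lt_def]; exact kk.isLt
  have hρne : ∀ kk, ρ kk ≠ i := fun kk => ne_of_lt (hρlt kk)
  have hρinj : Function.Injective ρ := by
    intro a b h
    have h2 : (ρ a).val = (ρ b).val := congrArg Fin.val h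
    exact Fin.ext h2
  have hvs_ne : ∀ kk : Fin i.val, ((ρ kk, Fin.natAdd n (ρ kk)) : Fin r × Fin (n + r)) ≠ v := by
    intro kk h
    rw [hv] at h
    exact hρne kk (congrArg Prod.fst h)
  set vsv : Fin i.val → {q : Fin r × Fin (n + r) // q ≠ v} :=
    fun kk => ⟨(ρ kk, Fin.natAdd n (ρ kk)), hvs_ne kk⟩ with hvsv
  have hinjv : Function.Injective vsv := by
    intro a b h
    have h1 : ρ a = ρ b := congrArg (Prod.fst ∘ Subtype.val) h
    exact hρinj h1
  set gD : Option (Fin i.val) → (MvPolynomial (Fin n ⊕ Fin (n + r)) R₀ ⧸ Ideal.span M₀) :=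
    fun o => β (Fin.natAdd n (Option.elim o i ρ)) with hgD
  have hLTsplit : ∀ kk : Fin i.val, LT ⟨ρ kk, hρne kk⟩
      = X (vsv kk) * C (gD (some kk)) + kill (vsv kk) (LT ⟨ρ kk, hρne kk⟩) := by
    intro kk
    have e1 := hLT ⟨ρ kk, hρne kk⟩
    conv_rhs at e1 => rw [hsplitLb (ρ kk)]
    rw [map_add, map_mul, theta_X_ne v (hvs_ne kk), theta_C,
      theta_kill_comm v _ (hvs_ne kk), ← hLT ⟨ρ kk, hρne kk⟩, Polynomial.map_C,
      ← Polynomial.C_mul, ← Polynomial.C_add] at e1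
    exact Polynomial.C_injective e1
  have hLTfix : ∀ kk kk' : Fin i.val, kk ≠ kk' →
      kill (vsv kk') (LT ⟨ρ kk, hρne kk⟩) = LT ⟨ρ kk, hρne kk⟩ := by
    intro kk kk' hkk
    have e2 : kill ((ρ kk', Fin.natAdd n (ρ kk')) : Fin r × Fin (n + r)) (Lb (ρ kk))
        = Lb (ρ kk) := by
      apply hkillLb
      intro h
      exact hkk (hρinj h).symm
    have e1 := theta_kill_comm (A := MvPolynomial (Fin n ⊕ Fin (n + r)) R₀ ⧸ Ideal.span M₀) v
      ((ρ kk', Fin.natAdd n (ρ kk')) : Fin r × Fin (n + r)) (hvs_ne kk') (Lb (ρ kk))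
    rw [e2, ← hLT ⟨ρ kk, hρne kk⟩, Polynomial.map_C] at e1
    exact (Polynomial.C_injective e1).symm
  set cD : Fin i.val → MvPolynomial {q : Fin r × Fin (n + r) // q ≠ v}
      (MvPolynomial (Fin n ⊕ Fin (n + r)) R₀ ⧸ Ideal.span M₀) :=
    fun kk => kill (vsv kk) (LT ⟨ρ kk, hρne kk⟩) with hcDdef
  have hspanPT : PT = Set.range (fun kk : Fin i.val =>
      X (vsv kk) * C (gD (some kk)) + cD kk) := by
    ext q
    constructor
    · rintro ⟨j, hj, rfl⟩
      have hjv : j.val < i.val := by rw [Fin.lt_def] at hj; exact hj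
      refine ⟨⟨j.val, hjv⟩, ?_⟩
      have hstep := hLTsplit ⟨j.val, hjv⟩
      have heq : (⟨ρ ⟨j.val, hjv⟩, hρne ⟨j.val, hjv⟩⟩ : {j : Fin r // j ≠ i})
          = ⟨j, ne_of_lt hj⟩ := Subtype.ext (Fin.ext rfl)
      rw [heq] at hstep
      exact hstep.symm
    · rintro ⟨kk, rfl⟩
      exact ⟨ρ kk, hρlt kk, (hLTsplit kk).symm⟩
  rw [hspanPT]
  show NzdMod _ (C (gD none))
  apply genericRegular i.val vsv hinjv gD cD
  · -- kill-fixedness of the cD's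
    intro j kk
    by_cases h : j = kk
    · subst h; exact kill_kill _ _
    · rw [hcDdef]
      dsimp only
      rw [kill_comm, hLTfix j kk h]
  · -- regularity of the b-variables over the minor ring
    intro S t ht
    have himg : gD '' S = ⇑(Ideal.Quotient.mk (Ideal.span M₀)) ''
        ((fun o : Option (Fin i.val) =>
          (X (Sum.inr (Fin.natAdd n (Option.elim o i ρ))) :
            MvPolynomial (Fin n ⊕ Fin (n + r)) R₀)) '' S) := by
      rw [← Set.image_comp]
      rfl
    rw [himg, ← Ideal.map_span]
    show NzdMod _ (Ideal.Quotient.mk (Ideal.span M₀)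
      (X (Sum.inr (Fin.natAdd n (Option.elim t i ρ)))))
    apply (NzdMod.bridge Ideal.Quotient.mk_surjective _ _).mpr
    rw [Ideal.mk_ker, ← Ideal.span_union]
    have hidx : ∀ o o' : Option (Fin i.val),
        Option.elim o i ρ = Option.elim o' i ρ → o = o' := by
      intro o o' h
      cases o <;> cases o' <;> simp only [Option.elim] at h
      · rfl
      · have h2 := congrArg Fin.val h
        simp only [hρ] at h2
        exact absurd h2.symm (Nat.ne_of_lt (Fin.isLt _))
      · have h2 := congrArg Fin.val h
        simp only [hρ] at h2
        exact absurd h2 (Nat.ne_of_lt (Fin.isLt _))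
      · exact congrArg some (hρinj h)
    apply nzdMod_vars
    rintro p (⟨j, l, hpart, rfl⟩ | ⟨s, hs, rfl⟩)
    · have hne1 : ∀ jn : Fin n, (Sum.inr (Fin.castAdd r jn) : Fin n ⊕ Fin (n + r))
          ≠ Sum.inr (Fin.natAdd n (Option.elim t i ρ)) := by
        intro jn h
        have h2 := congrArg Fin.val (Sum.inr_injective h)
        simp only [Fin.coe_castAdd, Fin.coe_natAdd] at h2
        have := jn.isLt
        omega
      rw [map_sub, map_mul, map_mul, kill_X_ne _ (hne1 j), kill_X_ne _ (hne1 l),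
        kill_X_ne _ (show (Sum.inl l : Fin n ⊕ Fin (n + r)) ≠ _ from fun h =>
          Sum.inl_ne_inr h),
        kill_X_ne _ (show (Sum.inl j : Fin n ⊕ Fin (n + r)) ≠ _ from fun h =>
          Sum.inl_ne_inr h)]
    · exact kill_X_ne _ (by
        intro h
        have h2 := Sum.inr_injective h
        have h3 := congrArg Fin.val h2
        simp only [Fin.coe_natAdd] at h3
        have h4 : Option.elim s i ρ = Option.elim t i ρ := Fin.ext (by omega)
        exact ht (hidx s t h4 ▸ hs))
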